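/- Let p be a prime and let G ≤ (ℤ/p)^k be a subgroup containing the all-ones vector 𝟙, with G/⟨𝟙⟩ ≅ ℤ/p. If for every pair of distinct indices i, j there exists x ∈ G with x_i ≠ x_j, then every element of G not in ⟨𝟙⟩ satisfies x_i ≠ x_j for all distinct i, j. -/

import Mathlib

/-- Let `p` be prime and `G ≤ (ℤ/p)^k` contain the all-ones vector `𝟙`, with
`G/⟨𝟙⟩ ≅ ℤ/p`. If every pair of distinct coordinates is distinguished by some
element of `G`, then every element of `G` not in `⟨𝟙⟩` has pairwise distinct
coordinates. -/
theorem stmt17 (p k : ℕ) (hp : p.Prime)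
    (G : AddSubgroup (Fin k → ZMod p))
    (hone : (fun _ => (1 : ZMod p)) ∈ G)
    (hquot : Nonempty
      ((G ⧸ AddSubgroup.closure {(⟨fun _ => (1 : ZMod p), hone⟩ : G)}) ≃+ ZMod p))
    (hdist : ∀ i j : Fin k, i ≠ j → ∃ x ∈ G, x i ≠ x j) :
    ∀ x ∈ G, x ∉ AddSubgroup.closure {(fun _ => (1 : ZMod p) : Fin k → ZMod p)} →
      ∀ i j : Fin k, i ≠ j → x i ≠ x j := by
  haveI := Fact.mk hp
  intro x hxG hx i j hij hxij
  obtain ⟨y, hyG, hyij⟩ := hdist i j hij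
  set one : G := ⟨fun _ => (1 : ZMod p), hone⟩ with hone_def
  obtain ⟨e⟩ := hquot
  set X : G := ⟨x, hxG⟩ with hX
  set Y : G := ⟨y, hyG⟩ with hY
  set N : AddSubgroup G := AddSubgroup.closure {one} with hN
  have hXN : X ∉ N := by
    intro h
    rw [hN, AddSubgroup.mem_closure_singleton] at h
    obtain ⟨m, hm⟩ := h
    apply hx
    rw [AddSubgroup.mem_closure_singleton]
    refine ⟨m, ?_⟩
    have := congrArg Subtype.val hm
    simpa using this
  have ha : e (QuotientAddGroup.mk X) ≠ 0 := by
    intro h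
    have h0 : (QuotientAddGroup.mk X : G ⧸ N) = 0 := by
      apply e.injective; simpa using h
    exact hXN ((QuotientAddGroup.eq_zero_iff X).mp h0)
  set a := e (QuotientAddGroup.mk X) with haa
  set b := e (QuotientAddGroup.mk Y) with hbb
  set n : ℤ := ((b * a⁻¹).val : ℤ) with hn
  have hcast : ((n : ZMod p)) = b * a⁻¹ := by
    rw [hn]
    push_cast
    simp [ZMod.natCast_val, ZMod.cast_id]
  have hba : n • a = b := by
    rw [zsmul_eq_mul, hcast, mul_assoc, inv_mul_cancel₀ ha, mul_one]
  have hquot_eq : (QuotientAddGroup.mk Y : G ⧸ N) = n • QuotientAddGroup.mk X := by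
    apply e.injective
    rw [map_zsmul]
    exact hba.symm
  have hmem : Y - n • X ∈ N := by
    have : (QuotientAddGroup.mk (Y - n • X) : G ⧸ N) = 0 := by
      rw [QuotientAddGroup.mk_sub, QuotientAddGroup.mk_zsmul, hquot_eq, sub_self]
    exact (QuotientAddGroup.eq_zero_iff _).mp this
  rw [hN, AddSubgroup.mem_closure_singleton] at hmem
  obtain ⟨m, hm⟩ := hmem
  have hv := congrArg Subtype.val hm
  have hvi := congrFun hv i
  have hvj := congrFun hv j
  simp [hX, hY, hone_def] at hvi hvj
  apply hyij
  rw [hxij] at hvi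
  linear_combination hvj - hvi
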